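/- As the integer k → ∞, log ∏_{√k < p ≤ k, p prime} p/(p − a_{1,p}(k)) = O(√k · log log k). -/

import Mathlib

open Finset Filter Real Asymptotics

/-- `digit i p k` is the `i`-th digit of `k` in base `p`, i.e. `⌊k / p^i⌋ mod p`. -/
def digit (i p k : ℕ) : ℕ := (k / p ^ i) % p

lemma pow_self_le_factorial_mul_exp (n : ℕ) :
    (n : ℝ) ^ n ≤ (n.factorial : ℝ) * Real.exp 1 ^ n := by
  induction n with
  | zero => simp
  | succ n ih =>
    have hstep : ((n : ℝ) + 1) ^ n ≤ (n : ℝ) ^ n * Real.exp 1 := by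
      rcases Nat.eq_zero_or_pos n with hn | hn
      · subst hn; simpa using Real.one_le_exp (by norm_num : (0:ℝ) ≤ 1)
      · have hn' : (0:ℝ) < n := by exact_mod_cast hn
        have h1 : (n : ℝ) + 1 ≤ n * Real.exp (1 / n) := by
          have h2 := Real.add_one_le_exp (1 / (n:ℝ))
          have h3 : (n:ℝ) * (1/n) = 1 := by field_simp
          nlinarith [mul_le_mul_of_nonneg_left h2 hn'.le]
        calc ((n:ℝ) + 1) ^ n ≤ ((n:ℝ) * Real.exp (1 / n)) ^ n := by
              apply pow_le_pow_left₀ (by positivity) h1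
          _ = (n:ℝ) ^ n * Real.exp (1 / n) ^ n := mul_pow _ _ _
          _ = (n:ℝ) ^ n * Real.exp 1 := by
              rw [← Real.exp_nat_mul]
              congr 1
              field_simp
    calc ((n+1:ℕ) : ℝ) ^ (n+1) = ((n:ℝ)+1) * ((n:ℝ)+1) ^ n := by push_cast; ring
      _ ≤ ((n:ℝ)+1) * ((n:ℝ) ^ n * Real.exp 1) :=
          mul_le_mul_of_nonneg_left hstep (by positivity)
      _ ≤ ((n:ℝ)+1) * (((n.factorial : ℝ) * Real.exp 1 ^ n) * Real.exp 1) := by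
          apply mul_le_mul_of_nonneg_left _ (by positivity)
          exact mul_le_mul_of_nonneg_right ih (le_of_lt (Real.exp_pos 1))
      _ = ((n+1).factorial : ℝ) * Real.exp 1 ^ (n+1) := by
          push_cast [Nat.factorial_succ]; ring

set_option maxHeartbeats 1000000 in
theorem middle_digit_product_bound :
    (fun k : ℕ =>
        Real.log (∏ p ∈ (Finset.range (k + 1)).filter (fun p => p.Prime ∧ k < p * p),
          (p : ℝ) / (p - digit 1 p k)))
      =O[atTop] (fun k : ℕ => Real.sqrt k * Real.log (Real.log k)) := by
  rw [isBigO_iff]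
  refine ⟨9, ?_⟩
  filter_upwards [eventually_ge_atTop 25] with k hk
  set m := Nat.sqrt k with hmdef
  have hm5 : 5 ≤ m := Nat.le_sqrt.mpr (by omega)
  have hkm : k < (m+1) * (m+1) := Nat.lt_succ_sqrt k
  have hmk : m * m ≤ k := Nat.sqrt_le k
  have hkmr : (k:ℝ) < ((m:ℝ)+1) * ((m:ℝ)+1) := by exact_mod_cast hkm
  have hkmr1 : (k:ℝ) + 1 ≤ ((m:ℝ)+1) * ((m:ℝ)+1) := by exact_mod_cast hkm
  set S := (Finset.range (k + 1)).filter (fun p => p.Prime ∧ k < p * p) with hS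
  set g : ℕ → ℝ := fun n => Real.log ((n:ℝ)^2 / ((n:ℝ)^2 - k)) with hg
  -- positivity of denominators
  have hgpos : ∀ n : ℕ, m < n → (0:ℝ) < (n:ℝ)^2 - k := by
    intro n hn
    have h1 : k < n ^ 2 := Nat.sqrt_lt'.mp hn
    have h2 : (k:ℝ) < (n:ℝ)^2 := by exact_mod_cast h1
    linarith
  have hgnonneg : ∀ n : ℕ, m < n → 0 ≤ g n := by
    intro n hn
    apply Real.log_nonneg
    rw [le_div_iff₀ (hgpos n hn)]
    have : (0:ℝ) ≤ (k:ℝ) := by positivity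
    linarith
  -- facts about elements of S
  have hmem : ∀ p ∈ S, p.Prime ∧ p ≤ k ∧ k < p * p ∧ m < p := by
    intro p hp
    simp only [hS, mem_filter, mem_range] at hp
    exact ⟨hp.2.1, by omega, hp.2.2, Nat.sqrt_lt'.mpr (by rw [pow_two]; exact hp.2.2)⟩
  have hdig : ∀ p ∈ S, (digit 1 p k : ℝ) < p ∧ (digit 1 p k : ℝ) * p ≤ k := by
    intro p hp
    obtain ⟨hprime, hple, hpk, _⟩ := hmem p hp
    have hp0 : 0 < p := hprime.pos
    have hdiv : k / p < p := (Nat.div_lt_iff_lt_mul hp0).mpr hpk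
    have ha : digit 1 p k = k / p := by
      simp [digit, pow_one, Nat.mod_eq_of_lt hdiv]
    constructor
    · rw [ha]; exact_mod_cast hdiv
    · rw [ha]
      have := Nat.div_mul_le_self k p
      exact_mod_cast this
  have hfac : ∀ p ∈ S, (1:ℝ) ≤ (p:ℝ) / ((p:ℝ) - digit 1 p k) := by
    intro p hp
    obtain ⟨hlt, _⟩ := hdig p hp
    have hden : (0:ℝ) < (p:ℝ) - digit 1 p k := by linarith
    rw [one_le_div hden]
    have : (0:ℝ) ≤ (digit 1 p k : ℝ) := by positivity
    linarith
  -- log of product = sum of logs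
  have hlog : Real.log (∏ p ∈ S, (p : ℝ) / (p - digit 1 p k))
      = ∑ p ∈ S, Real.log ((p : ℝ) / (p - digit 1 p k)) :=
    Real.log_prod (s := S) (fun p hp => by have := hfac p hp; positivity)
  have hnonnegL : 0 ≤ Real.log (∏ p ∈ S, (p : ℝ) / (p - digit 1 p k)) := by
    rw [hlog]
    exact Finset.sum_nonneg fun p hp => Real.log_nonneg (hfac p hp)
  -- termwise bound
  have hterm : ∀ p ∈ S, Real.log ((p : ℝ) / (p - digit 1 p k)) ≤ g p := by
    intro p hp
    obtain ⟨hprime, hple, hpk, hmp⟩ := hmem p hp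
    obtain ⟨hlt, hmul⟩ := hdig p hp
    have hden : (0:ℝ) < (p:ℝ) - digit 1 p k := by linarith
    have hp2 : (0:ℝ) < (p:ℝ)^2 - k := hgpos p hmp
    have hp0r : (0:ℝ) < p := by exact_mod_cast hprime.pos
    apply Real.log_le_log (div_pos hp0r hden)
    rw [div_le_div_iff₀ hden hp2]
    nlinarith [mul_le_mul_of_nonneg_left hmul hp0r.le]
  -- compare to sum over all integers in (m, k]
  have hsub : S ⊆ Finset.Ico (m+1) (k+1) := by
    intro p hp
    obtain ⟨_, hple, _, hmp⟩ := hmem p hp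
    exact mem_Ico.mpr ⟨hmp, by omega⟩
  have h12 : Real.log (∏ p ∈ S, (p : ℝ) / (p - digit 1 p k))
      ≤ ∑ n ∈ Finset.Ico (m+1) (k+1), g n := by
    rw [hlog]
    calc ∑ p ∈ S, Real.log ((p : ℝ) / (p - digit 1 p k)) ≤ ∑ p ∈ S, g p :=
          Finset.sum_le_sum hterm
      _ ≤ ∑ n ∈ Finset.Ico (m+1) (k+1), g n :=
          Finset.sum_le_sum_of_subset_of_nonneg hsub
            (fun n hn _ => hgnonneg n (by exact (mem_Ico.mp hn).1))
  have hk2 : 2*m+2 ≤ k+1 := by nlinarith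
  have hsplit : ∑ n ∈ Finset.Ico (m+1) (k+1), g n
      = ∑ n ∈ Finset.Ico (m+1) (2*m+2), g n + ∑ n ∈ Finset.Ico (2*m+2) (k+1), g n :=
    (Finset.sum_Ico_consecutive _ (by omega) hk2).symm
  -- chunk 1
  have hA : ∑ n ∈ Finset.Ico (m+1) (2*m+2), g n ≤ 2*(m:ℝ) + 4*(m:ℝ) := by
    rw [Finset.sum_eq_sum_Ico_succ_bot (by omega : m+1 < 2*m+2) g]
    have hfirst : g (m+1) ≤ 2*(m:ℝ) := by
      have hpos1 : (0:ℝ) < ((m+1:ℕ):ℝ)^2 - k := hgpos (m+1) (by omega)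
      have hden1 : (1:ℝ) ≤ ((m+1:ℕ):ℝ)^2 - k := by
        push_cast
        nlinarith
      have hnum : (0:ℝ) ≤ ((m+1:ℕ):ℝ)^2 := by positivity
      have h1 : g (m+1) ≤ Real.log (((m+1:ℕ):ℝ)^2) :=
        Real.log_le_log (div_pos (by positivity) hpos1) (div_le_self hnum hden1)
      have h2 : Real.log (((m+1:ℕ):ℝ)^2) = 2 * Real.log ((m+1:ℕ):ℝ) := by
        rw [Real.log_pow]; norm_num
      have h3 : Real.log ((m+1:ℕ):ℝ) ≤ (m:ℝ) := by
        have := Real.log_le_sub_one_of_pos (by positivity : (0:ℝ) < ((m+1:ℕ):ℝ))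
        push_cast at this ⊢
        linarith
      calc g (m+1) ≤ 2 * Real.log ((m+1:ℕ):ℝ) := h1.trans_eq h2
        _ ≤ 2*(m:ℝ) := by linarith
    have hrest : ∑ n ∈ Finset.Ico (m+2) (2*m+2), g n ≤ 4*(m:ℝ) := by
      rw [Finset.sum_Ico_eq_sum_range]
      have hcard : 2*m+2 - (m+2) = m := by omega
      rw [hcard]
      have hBd : ∀ d ∈ Finset.range m, g (m+2+d)
          ≤ Real.log ((2*(m:ℝ)+2) / ((d:ℝ)+1)) := by
        intro d hd
        have hdm : d < m := Finset.mem_range.mp hd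
        have hdr : (d:ℝ) < m := by exact_mod_cast hdm
        set n := m+2+d with hn
        have hmn : m < n := by omega
        have hpos2 : (0:ℝ) < (n:ℝ)^2 - k := hgpos n hmn
        have hnr : (n:ℝ) = (m:ℝ)+2+d := by rw [hn]; push_cast; ring
        have hdenlb : ((d:ℝ)+1)*(2*(m:ℝ)+2) ≤ (n:ℝ)^2 - k := by
          rw [hnr]; nlinarith
        have hnum2 : (n:ℝ)^2 ≤ (2*(m:ℝ)+2)^2 := by
          rw [hnr]; nlinarith
        have hdpos : (0:ℝ) < ((d:ℝ)+1)*(2*(m:ℝ)+2) := by positivity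
        have hq : (n:ℝ)^2 / ((n:ℝ)^2 - k)
            ≤ (2*(m:ℝ)+2)^2 / (((d:ℝ)+1)*(2*(m:ℝ)+2)) :=
          div_le_div₀ (by positivity) hnum2 hdpos hdenlb
        have heq : (2*(m:ℝ)+2)^2 / (((d:ℝ)+1)*(2*(m:ℝ)+2)) = (2*(m:ℝ)+2)/((d:ℝ)+1) := by
          field_simp
        apply Real.log_le_log (div_pos (by positivity) hpos2)
        rw [← heq]
        exact hq
      calc ∑ d ∈ Finset.range m, g (m+2+d)
          ≤ ∑ d ∈ Finset.range m, Real.log ((2*(m:ℝ)+2) / ((d:ℝ)+1)) :=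
            Finset.sum_le_sum hBd
        _ ≤ 4*(m:ℝ) := by
            rw [← Real.log_prod (s := Finset.range m) (f := fun d => (2*(m:ℝ)+2)/((d:ℝ)+1)) (fun d _ => by positivity)]
            have hprodeq : ∏ d ∈ Finset.range m, ((2*(m:ℝ)+2)/((d:ℝ)+1))
                = (2*(m:ℝ)+2)^m / (m.factorial : ℝ) := by
              rw [Finset.prod_div_distrib, Finset.prod_const, Finset.card_range]
              congr 1
              have hh := Finset.prod_range_add_one_eq_factorial m
              calc ∏ d ∈ Finset.range m, ((d:ℝ)+1)
                  = ((∏ d ∈ Finset.range m, (d+1) : ℕ) : ℝ) := by push_cast; ring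
                _ = (m.factorial : ℝ) := by rw [hh]
            rw [hprodeq]
            have hfacpos : (0:ℝ) < (m.factorial : ℝ) := by
              exact_mod_cast m.factorial_pos
            have hmr1 : (1:ℝ) ≤ (m:ℝ) := by
              have : (5:ℝ) ≤ (m:ℝ) := by exact_mod_cast hm5
              linarith
            have hle : (2*(m:ℝ)+2)^m / (m.factorial : ℝ) ≤ (4*Real.exp 1)^m := by
              rw [div_le_iff₀ hfacpos]
              calc (2*(m:ℝ)+2)^m ≤ (4*(m:ℝ))^m :=
                    pow_le_pow_left₀ (by linarith) (by linarith) m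
                _ = 4^m * (m:ℝ)^m := mul_pow _ _ _
                _ ≤ 4^m * ((m.factorial : ℝ) * Real.exp 1 ^ m) :=
                    mul_le_mul_of_nonneg_left (pow_self_le_factorial_mul_exp m)
                      (by positivity)
                _ = (4*Real.exp 1)^m * (m.factorial : ℝ) := by rw [mul_pow]; ring
            have hlpos : (0:ℝ) < (2*(m:ℝ)+2)^m / (m.factorial : ℝ) := by positivity
            calc Real.log ((2*(m:ℝ)+2)^m / (m.factorial : ℝ))
                ≤ Real.log ((4*Real.exp 1)^m) := Real.log_le_log hlpos hle
              _ = m * Real.log (4*Real.exp 1) := Real.log_pow (4*Real.exp 1) m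
              _ = m * (Real.log 4 + 1) := by
                  rw [Real.log_mul (by norm_num) (Real.exp_ne_zero 1), Real.log_exp]
              _ ≤ m * 4 := by
                  have h4 : Real.log 4 ≤ 3 := by
                    have := Real.log_le_sub_one_of_pos (by norm_num : (0:ℝ) < 4)
                    linarith
                  have hm0 : (0:ℝ) ≤ (m:ℝ) := by positivity
                  nlinarith
              _ = 4*(m:ℝ) := mul_comm _ _
    linarith
  -- chunk 2
  have hB : ∑ n ∈ Finset.Ico (2*m+2) (k+1), g n ≤ 2*(m:ℝ)+2 := by
    have hterm2 : ∀ n ∈ Finset.Ico (2*m+2) (k+1), g n ≤ 2*(k:ℝ) * (((n:ℝ)^2)⁻¹) := by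
      intro n hn
      obtain ⟨hn1, hn2⟩ := mem_Ico.mp hn
      have hmn : m < n := by omega
      have hpos2 : (0:ℝ) < (n:ℝ)^2 - k := hgpos n hmn
      have hnr : 2*(m:ℝ)+2 ≤ (n:ℝ) := by exact_mod_cast hn1
      have hn0 : (0:ℝ) < (n:ℝ) := by linarith
      have h2k : 2*(k:ℝ) ≤ (n:ℝ)^2 := by nlinarith
      have h1 : g n ≤ (n:ℝ)^2 / ((n:ℝ)^2 - k) - 1 :=
        Real.log_le_sub_one_of_pos (div_pos (by positivity) hpos2)
      have h2 : (n:ℝ)^2 / ((n:ℝ)^2 - k) - 1 = (k:ℝ)/((n:ℝ)^2 - k) := by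
        field_simp
        ring
      have h3 : (k:ℝ)/((n:ℝ)^2 - k) ≤ 2*(k:ℝ) * (((n:ℝ)^2)⁻¹) := by
        rw [← div_eq_mul_inv, div_le_div_iff₀ hpos2 (by positivity)]
        have hk0 : (0:ℝ) ≤ (k:ℝ) := by positivity
        nlinarith
      linarith [h1, h2.le]
    calc ∑ n ∈ Finset.Ico (2*m+2) (k+1), g n
        ≤ ∑ n ∈ Finset.Ico (2*m+2) (k+1), 2*(k:ℝ) * (((n:ℝ)^2)⁻¹) :=
          Finset.sum_le_sum hterm2
      _ = 2*(k:ℝ) * ∑ n ∈ Finset.Ico (2*m+2) (k+1), (((n:ℝ)^2)⁻¹) := by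
          rw [Finset.mul_sum]
      _ ≤ 2*(k:ℝ) * (2/(2*(m:ℝ)+2)) := by
          apply mul_le_mul_of_nonneg_left _ (by positivity)
          have hIoo : Finset.Ico (2*m+2) (k+1) = Finset.Ioo (2*m+1) (k+1) := by
            exact Finset.Ico_add_one_left_eq_Ioo (2*m+1) (k+1)
          rw [hIoo]
          have hs := sum_Ioo_inv_sq_le (α := ℝ) (2*m+1) (k+1)
          push_cast at hs
          have he : (2*(m:ℝ)+1+1) = 2*(m:ℝ)+2 := by ring
          rw [he] at hs
          exact hs
      _ ≤ 2*(m:ℝ)+2 := by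
          have hm1 : (0:ℝ) < 2*(m:ℝ)+2 := by positivity
          have he : 2*(k:ℝ) * (2/(2*(m:ℝ)+2)) = 4*(k:ℝ)/(2*(m:ℝ)+2) := by ring
          rw [he, div_le_iff₀ hm1]
          nlinarith
  -- final assembly
  have hmr : (m:ℝ) ≤ Real.sqrt k := Real.nat_sqrt_le_real_sqrt
  have hk0 : (0:ℝ) < k := by
    have : (25:ℝ) ≤ k := by exact_mod_cast hk
    linarith
  have h25 : (25:ℝ) ≤ k := by exact_mod_cast hk
  have h9 := Real.exp_one_lt_d9
  have hlogk : 3 ≤ Real.log k := by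
    rw [Real.le_log_iff_exp_le hk0]
    have hexp3 : Real.exp 3 = Real.exp 1 ^ 3 := by
      rw [← Real.exp_nat_mul]; norm_num
    have hcube : Real.exp 1 ^ 3 < (2.7182818286:ℝ) ^ 3 := by
      apply pow_lt_pow_left₀ h9 (Real.exp_pos 1).le
      norm_num
    have : (2.7182818286:ℝ)^3 < 25 := by norm_num
    linarith [hexp3.le]
  have hll : 1 ≤ Real.log (Real.log k) := by
    rw [Real.le_log_iff_exp_le (by linarith : (0:ℝ) < Real.log k)]
    linarith
  have hsq : (0:ℝ) ≤ Real.sqrt k := Real.sqrt_nonneg k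
  have hbound : Real.log (∏ p ∈ S, (p : ℝ) / (p - digit 1 p k)) ≤ 9*(m:ℝ) := by
    have hm2 : (2:ℝ) ≤ (m:ℝ) := by
      have : (5:ℝ) ≤ (m:ℝ) := by exact_mod_cast hm5
      linarith
    have := h12.trans_eq hsplit
    linarith
  rw [Real.norm_eq_abs, Real.norm_eq_abs, abs_of_nonneg hnonnegL,
    abs_of_nonneg (mul_nonneg hsq (by linarith))]
  calc Real.log (∏ p ∈ S, (p : ℝ) / (p - digit 1 p k)) ≤ 9*(m:ℝ) := hbound
    _ ≤ 9*Real.sqrt k := by linarith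
    _ ≤ 9*(Real.sqrt k * Real.log (Real.log k)) := by nlinarith
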